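/- Let B be a bicategory and W a class of 1-morphisms satisfying [WB1]–[WB5]. If w ∈ W and α : w ∘ f ⇒ w ∘ g is an invertible 2-cell, then there exists a 1-morphism u ∈ W and an invertible 2-cell β : f ∘ u ⇒ g ∘ u such that w ∘ β = α ∘ u. -/

import Mathlib

open CategoryTheory Bicategory

universe w v u

/-- A class of 1-morphisms in a bicategory. -/
def WClass (B : Type u) [Bicategory.{w, v} B] :=
  ∀ ⦃a b : B⦄, (a ⟶ b) → Prop

namespace WClass

variable {B : Type u} [Bicategory.{w, v} B]

/-- [WB1]: all identities are in `W`. -/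
def WB1 (W : WClass B) : Prop := ∀ a : B, W (𝟙 a)

/-- [WB2]: for composable arrows of `W` there is a pre-composition landing in `W`. -/
def WB2 (W : WClass B) : Prop :=
  ∀ ⦃a b c : B⦄ (vm : a ⟶ b) (wm : b ⟶ c), W vm → W wm →
    ∃ (a' : B) (u : a' ⟶ a), W (u ≫ vm ≫ wm)

/-- [WB3]: squares with invertible fillers over cospans with one leg in `W`. -/
def WB3 (W : WClass B) : Prop :=
  ∀ ⦃a b c : B⦄ (wm : a ⟶ b) (f : c ⟶ b), W wm →
    ∃ (d : B) (h : d ⟶ a) (vm : d ⟶ c), W vm ∧ Nonempty (h ≫ wm ≅ vm ≫ f)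

/-- `β` is a lifting of the 2-cell `η : f ≫ wm ⟶ g ≫ wm` along `wm`, via `u`. -/
def IsLift ⦃a b c : B⦄ (f g : a ⟶ b) (wm : b ⟶ c) (η : f ≫ wm ⟶ g ≫ wm)
    ⦃a' : B⦄ (u : a' ⟶ a) (β : u ≫ f ⟶ u ≫ g) : Prop :=
  β ▷ wm = (α_ u f wm).hom ≫ u ◁ η ≫ (α_ u g wm).inv

/-- [WB4]: existence of liftings of 2-cells along arrows of `W`, together with
the compatibility of any two such liftings. -/
def WB4 (W : WClass B) : Prop :=
  (∀ ⦃a b c : B⦄ (f g : a ⟶ b) (wm : b ⟶ c), W wm → ∀ η : f ≫ wm ⟶ g ≫ wm,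
    ∃ (a' : B) (u : a' ⟶ a), W u ∧ ∃ β : u ≫ f ⟶ u ≫ g, IsLift f g wm η u β) ∧
  (∀ ⦃a b c : B⦄ (f g : a ⟶ b) (wm : b ⟶ c), W wm → ∀ η : f ≫ wm ⟶ g ≫ wm,
    ∀ ⦃a₁ : B⦄ (u₁ : a₁ ⟶ a) (β₁ : u₁ ≫ f ⟶ u₁ ≫ g), W u₁ → IsLift f g wm η u₁ β₁ →
      ∀ ⦃a₂ : B⦄ (u₂ : a₂ ⟶ a) (β₂ : u₂ ≫ f ⟶ u₂ ≫ g), W u₂ → IsLift f g wm η u₂ β₂ →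
        ∃ (d : B) (s : d ⟶ a₁) (t : d ⟶ a₂), W (s ≫ u₁) ∧ W (t ≫ u₂) ∧
          ∃ ε₀ : s ≫ u₁ ≅ t ≫ u₂,
            ((α_ s u₁ f).hom ≫ s ◁ β₁ ≫ (α_ s u₁ g).inv) ≫ ε₀.hom ▷ g =
              ε₀.hom ▷ f ≫ (α_ t u₂ f).hom ≫ t ◁ β₂ ≫ (α_ t u₂ g).inv)

/-- [WB5]: `W` is closed under invertible 2-cells. -/
def WB5 (W : WClass B) : Prop :=
  ∀ ⦃a b : B⦄ (vm wm : a ⟶ b), W wm → Nonempty (vm ≅ wm) → W vm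

end WClass


namespace WClass

variable {B : Type u} [Bicategory.{w, v} B]

lemma isLift_whisker {a b c a' e : B} {f g : a ⟶ b} {wm : b ⟶ c} {η : f ≫ wm ⟶ g ≫ wm}
    {u : a' ⟶ a} {β : u ≫ f ⟶ u ≫ g} (x : e ⟶ a') (h : IsLift f g wm η u β) :
    IsLift f g wm η (x ≫ u) ((α_ x u f).hom ≫ x ◁ β ≫ (α_ x u g).inv) := by
  unfold IsLift at h ⊢
  calc _ = (α_ x u f).hom ▷ wm ≫ (α_ x (u ≫ f) wm).hom ≫ x ◁ (β ▷ wm) ≫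
        (α_ x (u ≫ g) wm).inv ≫ (α_ x u g).inv ▷ wm := by bicategory
    _ = _ := by rw [h]; bicategory

lemma isLift_iso {a b c a' : B} {f g : a ⟶ b} {wm : b ⟶ c} {η : f ≫ wm ⟶ g ≫ wm}
    {u u' : a' ⟶ a} {β : u ≫ f ⟶ u ≫ g} (φ : u' ≅ u) (h : IsLift f g wm η u β) :
    IsLift f g wm η u' (φ.hom ▷ f ≫ β ≫ φ.inv ▷ g) := by
  unfold IsLift at h ⊢
  calc _ = φ.hom ▷ f ▷ wm ≫ β ▷ wm ≫ φ.inv ▷ g ▷ wm := by bicategory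
    _ = φ.hom ▷ f ▷ wm ≫ ((α_ u f wm).hom ≫ u ◁ η ≫ (α_ u g wm).inv) ≫ φ.inv ▷ g ▷ wm := by
        rw [h]
    _ = (α_ u' f wm).hom ≫ (φ.hom ▷ (f ≫ wm) ≫ u ◁ η ≫ φ.inv ▷ (g ≫ wm)) ≫ (α_ u' g wm).inv := by
        bicategory
    _ = (α_ u' f wm).hom ≫ (u' ◁ η ≫ φ.hom ▷ (g ≫ wm) ≫ φ.inv ▷ (g ≫ wm)) ≫ (α_ u' g wm).inv := by
        rw [whisker_exchange_assoc]
    _ = _ := by rw [← comp_whiskerRight, φ.hom_inv_id, id_whiskerRight, Category.comp_id]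

lemma isLift_comp {a b c a' : B} {f g k : a ⟶ b} {wm : b ⟶ c}
    {η : f ≫ wm ⟶ g ≫ wm} {η' : g ≫ wm ⟶ k ≫ wm}
    {u : a' ⟶ a} {β : u ≫ f ⟶ u ≫ g} {β' : u ≫ g ⟶ u ≫ k}
    (h : IsLift f g wm η u β) (h' : IsLift g k wm η' u β') :
    IsLift f k wm (η ≫ η') u (β ≫ β') := by
  unfold IsLift at h h' ⊢
  rw [comp_whiskerRight, h, h', Bicategory.whiskerLeft_comp]
  simp

lemma isLift_id {a b c : B} (f : a ⟶ b) (wm : b ⟶ c) :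
    IsLift f f wm (𝟙 (f ≫ wm)) (𝟙 a) (𝟙 (𝟙 a ≫ f)) := by
  simp [IsLift]

lemma cancel_aux {a b c d₁ e : B} {f : a ⟶ b} {wm : b ⟶ c} (s : d₁ ⟶ a) (t : d₁ ⟶ e)
    (q : e ⟶ a) (θ : q ≫ f ⟶ q ≫ f) (ε₀ : s ≫ 𝟙 a ≅ t ≫ q)
    (hε : ((α_ s (𝟙 a) f).hom ≫ s ◁ 𝟙 (𝟙 a ≫ f) ≫ (α_ s (𝟙 a) f).inv) ≫ ε₀.hom ▷ f =
      ε₀.hom ▷ f ≫ (α_ t q f).hom ≫ t ◁ θ ≫ (α_ t q f).inv) :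
    t ◁ θ = 𝟙 _ := by
  simp only [Bicategory.whiskerLeft_id, Category.id_comp, Iso.hom_inv_id] at hε
  nth_rewrite 1 [← Category.comp_id (ε₀.hom ▷ f)] at hε
  have h2 := ((cancel_epi (ε₀.hom ▷ f)).mp hε).symm
  have h3 := congrArg (fun z => (α_ t q f).inv ≫ z ≫ (α_ t q f).hom) h2
  simpa using h3

lemma conj_comp_eq_id {a b d e : B} {f g : a ⟶ b} (t : d ⟶ e) (q : e ⟶ a)
    {p : q ≫ f ⟶ q ≫ g} {r : q ≫ g ⟶ q ≫ f} (h : t ◁ (p ≫ r) = 𝟙 _) :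
    ((α_ t q f).hom ≫ t ◁ p ≫ (α_ t q g).inv) ≫ ((α_ t q g).hom ≫ t ◁ r ≫ (α_ t q f).inv) =
      𝟙 _ := by
  rw [Bicategory.whiskerLeft_comp] at h
  simp only [Category.assoc, Iso.inv_hom_id_assoc]
  rw [← Category.assoc (t ◁ p), h]
  simp

end WClass

theorem statement1 {B : Type u} [Bicategory.{w, v} B] (W : WClass B)
    (h1 : W.WB1) (h2 : W.WB2) (h3 : W.WB3) (h4 : W.WB4) (h5 : W.WB5)
    {a b c : B} (f g : a ⟶ b) (wm : b ⟶ c) (hw : W wm)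
    (η : f ≫ wm ≅ g ≫ wm) :
    ∃ (a' : B) (u : a' ⟶ a), W u ∧
      ∃ β : u ≫ f ≅ u ≫ g, WClass.IsLift f g wm η.hom u β.hom := by
  obtain ⟨a₁, u, hWu, β, hβ⟩ := h4.1 f g wm hw η.hom
  obtain ⟨a₂, v, hWv, γ, hγ⟩ := h4.1 g f wm hw η.inv
  obtain ⟨d, hh, vm, hWvm, ⟨φ⟩⟩ := h3 u v hWu
  -- lifts of η.hom and η.inv over the common source hh ≫ u
  have hβ1 : WClass.IsLift f g wm η.hom (hh ≫ u)
      ((α_ hh u f).hom ≫ hh ◁ β ≫ (α_ hh u g).inv) := WClass.isLift_whisker hh hβ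
  have hγ1 : WClass.IsLift g f wm η.inv (hh ≫ u)
      (φ.hom ▷ g ≫ ((α_ vm v g).hom ≫ vm ◁ γ ≫ (α_ vm v f).inv) ≫ φ.inv ▷ f) :=
    WClass.isLift_iso φ (WClass.isLift_whisker vm hγ)
  set βt := (α_ hh u f).hom ≫ hh ◁ β ≫ (α_ hh u g).inv with hβt
  set γt := φ.hom ▷ g ≫ ((α_ vm v g).hom ≫ vm ◁ γ ≫ (α_ vm v f).inv) ≫ φ.inv ▷ f with hγt
  -- refine so that the source is in W
  obtain ⟨e, u₀, hWu₀⟩ := h2 vm v hWvm hWv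
  have hWq : W (u₀ ≫ hh ≫ u) := h5 _ _ hWu₀ ⟨whiskerLeftIso u₀ φ⟩
  set βh := (α_ u₀ (hh ≫ u) f).hom ≫ u₀ ◁ βt ≫ (α_ u₀ (hh ≫ u) g).inv with hβh
  set γh := (α_ u₀ (hh ≫ u) g).hom ≫ u₀ ◁ γt ≫ (α_ u₀ (hh ≫ u) f).inv with hγh
  have hβ2 : WClass.IsLift f g wm η.hom (u₀ ≫ hh ≫ u) βh := WClass.isLift_whisker u₀ hβ1
  have hγ2 : WClass.IsLift g f wm η.inv (u₀ ≫ hh ≫ u) γh := WClass.isLift_whisker u₀ hγ1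
  have hfg : WClass.IsLift f f wm (𝟙 (f ≫ wm)) (u₀ ≫ hh ≫ u) (βh ≫ γh) := by
    have := WClass.isLift_comp hβ2 hγ2
    rwa [η.hom_inv_id] at this
  -- first comparison with the trivial lift of the identity on f ≫ wm
  obtain ⟨d₁, s, t, hWs, hWt, ε₀, hε⟩ := h4.2 f f wm hw (𝟙 (f ≫ wm)) (𝟙 a)
    (𝟙 (𝟙 a ≫ f)) (h1 a) (WClass.isLift_id f wm) (u₀ ≫ hh ≫ u) (βh ≫ γh) hWq hfg
  have h₁ : t ◁ (βh ≫ γh) = 𝟙 _ := WClass.cancel_aux (wm := wm) s t _ _ ε₀ hε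
  set Bm := (α_ t (u₀ ≫ hh ≫ u) f).hom ≫ t ◁ βh ≫ (α_ t (u₀ ≫ hh ≫ u) g).inv with hBm
  set Cm := (α_ t (u₀ ≫ hh ≫ u) g).hom ≫ t ◁ γh ≫ (α_ t (u₀ ≫ hh ≫ u) f).inv with hCm
  have hBC : Bm ≫ Cm = 𝟙 _ := WClass.conj_comp_eq_id t (u₀ ≫ hh ≫ u) h₁
  have hB : WClass.IsLift f g wm η.hom (t ≫ (u₀ ≫ hh ≫ u)) Bm := WClass.isLift_whisker t hβ2
  have hC : WClass.IsLift g f wm η.inv (t ≫ (u₀ ≫ hh ≫ u)) Cm := WClass.isLift_whisker t hγ2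
  have hgg : WClass.IsLift g g wm (𝟙 (g ≫ wm)) (t ≫ (u₀ ≫ hh ≫ u)) (Cm ≫ Bm) := by
    have := WClass.isLift_comp hC hB
    rwa [η.inv_hom_id] at this
  -- second comparison, now with the trivial lift of the identity on g ≫ wm
  obtain ⟨d₂, s', t', hWs', hWt', ε', hε'⟩ := h4.2 g g wm hw (𝟙 (g ≫ wm)) (𝟙 a)
    (𝟙 (𝟙 a ≫ g)) (h1 a) (WClass.isLift_id g wm) (t ≫ (u₀ ≫ hh ≫ u)) (Cm ≫ Bm) hWt hgg
  have h₂ : t' ◁ (Cm ≫ Bm) = 𝟙 _ := WClass.cancel_aux (wm := wm) s' t' _ _ ε' hε'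
  set B' := (α_ t' (t ≫ (u₀ ≫ hh ≫ u)) f).hom ≫ t' ◁ Bm ≫ (α_ t' (t ≫ (u₀ ≫ hh ≫ u)) g).inv with hB'
  set C' := (α_ t' (t ≫ (u₀ ≫ hh ≫ u)) g).hom ≫ t' ◁ Cm ≫ (α_ t' (t ≫ (u₀ ≫ hh ≫ u)) f).inv with hC'
  have hCB' : C' ≫ B' = 𝟙 _ := WClass.conj_comp_eq_id t' (t ≫ (u₀ ≫ hh ≫ u)) h₂
  have hBC' : B' ≫ C' = 𝟙 _ := by
    refine WClass.conj_comp_eq_id t' (t ≫ (u₀ ≫ hh ≫ u)) ?_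
    rw [hBC]
    simp
  refine ⟨d₂, t' ≫ t ≫ (u₀ ≫ hh ≫ u), hWt', ⟨B', C', hBC', hCB'⟩, ?_⟩
  exact WClass.isLift_whisker t' hB
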